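/- Let q be a prime power, a ∈ F_{q^6} \ F_{q^2}, and b ∈ F_{q^6}. Suppose A := Tr_{q^2}^{q^6}(a^{q+1} - a^{q^2+q}) = 0. Then the polynomial g_2(m) = m^q (a - a^{q^2})^{q+1} + m (a - a^{q^2})(a - a^{q^4}) + c, where c is a fixed constant in F_{q^6} depending on a and b, viewed as a q-linearized-affine equation in m, has exactly q solutions m in F_{q^2} provided it has at least one, since the associated homogeneous map m ↦ m^q (a - a^{q^2})^{q+1} + m (a - a^{q^2})(a - a^{q^4}) restricted to F_{q^2} has kernel of size q. -/

import Mathlib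

theorem stmt17 (p k q : ℕ) (hp : p.Prime) (hk : 0 < k) (hq : q = p ^ k)
    (F : Type*) [Field F] [Fintype F] (hF : Fintype.card F = q ^ 6)
    (a b c : F) (ha : a ^ q ^ 2 ≠ a)
    (hA : (a ^ (q + 1) - a ^ (q ^ 2 + q))
      + (a ^ (q + 1) - a ^ (q ^ 2 + q)) ^ q ^ 2
      + (a ^ (q + 1) - a ^ (q ^ 2 + q)) ^ q ^ 4 = 0)
    (hex : ∃ m : F, m ^ q ^ 2 = m ∧
      m ^ q * (a - a ^ q ^ 2) ^ (q + 1)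
        + m * ((a - a ^ q ^ 2) * (a - a ^ q ^ 4)) + c = 0) :
    Nat.card {m : F // m ^ q ^ 2 = m ∧
      m ^ q * (a - a ^ q ^ 2) ^ (q + 1)
        + m * ((a - a ^ q ^ 2) * (a - a ^ q ^ 4)) + c = 0} = q := by
  classical
  have hq1 : 1 < q := by
    rw [hq]; exact Nat.one_lt_pow hk.ne' hp.one_lt
  haveI : Fact p.Prime := ⟨hp⟩
  -- characteristic
  haveI hcharF : CharP F p := by
    obtain ⟨n, hpc, hcard⟩ := FiniteField.card F (ringChar F)
    have h1 : ringChar F ∣ p ^ (k * 6) := by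
      rw [pow_mul, ← hq, ← hF, hcard]
      exact dvd_pow_self _ n.2.ne'
    have h2 : ringChar F = p :=
      (Nat.prime_dvd_prime_iff_eq hpc hp).mp (hpc.dvd_of_dvd_pow h1)
    exact h2 ▸ ringChar.charP F
  -- frobenius facts
  have frobsub : ∀ (j : ℕ) (x y : F), (x - y) ^ q ^ j = x ^ q ^ j - y ^ q ^ j := by
    intro j x y
    have hqj : q ^ j = p ^ (k * j) := by rw [hq, ← pow_mul]
    rw [hqj]
    exact sub_pow_char_pow x y (k * j)
  have frobadd : ∀ (j : ℕ) (x y : F), (x + y) ^ q ^ j = x ^ q ^ j + y ^ q ^ j := by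
    intro j x y
    have hqj : q ^ j = p ^ (k * j) := by rw [hq, ← pow_mul]
    rw [hqj]
    exact add_pow_char_pow x y p (k * j)
  have h6 : ∀ x : F, x ^ q ^ 6 = x := fun x => by
    rw [← hF]; exact FiniteField.pow_card x
  obtain ⟨d, hd_def⟩ : ∃ x : F, x = a - a ^ q ^ 2 := ⟨_, rfl⟩
  rw [← hd_def]
  rw [← hd_def] at hex
  have hd : d ≠ 0 := by rw [hd_def]; exact sub_ne_zero.mpr (Ne.symm ha)
  -- basic frobenius images of d
  have hdq : d ^ q = a ^ q - a ^ q ^ 3 := by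
    have h := frobsub 1 a (a ^ q ^ 2)
    simp only [pow_one] at h
    rw [hd_def, h, ← pow_mul]
    ring
  have hd3 : d ^ q ^ 3 = a ^ q ^ 3 - a ^ q ^ 5 := by
    rw [hd_def, frobsub 3 a (a ^ q ^ 2), ← pow_mul]
    ring
  have hd4 : d ^ q ^ 4 = a ^ q ^ 4 - a := by
    rw [hd_def, frobsub 4 a (a ^ q ^ 2), ← pow_mul,
      show q ^ 2 * q ^ 4 = q ^ 6 by ring, h6]
  -- the key consequence of hA
  have key : d ^ (q ^ 4 + q ^ 3) = d ^ (q + 1) := by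
    have hX2 : (a ^ (q + 1) - a ^ (q ^ 2 + q)) ^ q ^ 2
        = a ^ ((q + 1) * q ^ 2) - a ^ ((q ^ 2 + q) * q ^ 2) := by
      rw [frobsub 2, ← pow_mul, ← pow_mul]
    have h65 : a ^ ((q ^ 2 + q) * q ^ 4) = a ^ q ^ 5 * a := by
      have h' : a ^ ((q ^ 2 + q) * q ^ 4) = a ^ q ^ 6 * a ^ q ^ 5 := by ring
      rw [h', h6, mul_comm]
    have hX4 : (a ^ (q + 1) - a ^ (q ^ 2 + q)) ^ q ^ 4
        = a ^ ((q + 1) * q ^ 4) - a ^ q ^ 5 * a := by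
      rw [frobsub 4, ← pow_mul, ← pow_mul, h65]
    rw [hX2, hX4] at hA
    have lhs_eq : d ^ (q ^ 4 + q ^ 3) = (a ^ q ^ 4 - a) * (a ^ q ^ 3 - a ^ q ^ 5) := by
      rw [show d ^ (q ^ 4 + q ^ 3) = d ^ q ^ 4 * d ^ q ^ 3 by ring, hd4, hd3]
    have rhs_eq : d ^ (q + 1) = (a ^ q - a ^ q ^ 3) * (a - a ^ q ^ 2) := by
      rw [show d ^ (q + 1) = d ^ q * d by ring, hdq, hd_def]
    rw [lhs_eq, rhs_eq]
    linear_combination -hA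
  -- the explicit kernel element
  obtain ⟨m₀, hm₀_def⟩ : ∃ x : F, x = d ^ (q ^ 3 + q ^ 2 + q) := ⟨_, rfl⟩
  have hm₀ : m₀ ≠ 0 := by rw [hm₀_def]; exact pow_ne_zero _ hd
  have hm₀K : m₀ ^ q ^ 2 = m₀ := by
    have e1 : d ^ (q ^ 5 + q ^ 4) = d ^ (q ^ 2 + q) := by
      calc d ^ (q ^ 5 + q ^ 4) = (d ^ (q ^ 4 + q ^ 3)) ^ q := by ring
        _ = (d ^ (q + 1)) ^ q := by rw [key]
        _ = d ^ (q ^ 2 + q) := by ring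
    calc m₀ ^ q ^ 2 = d ^ (q ^ 5 + q ^ 4) * d ^ q ^ 3 := by rw [hm₀_def]; ring
      _ = d ^ (q ^ 2 + q) * d ^ q ^ 3 := by rw [e1]
      _ = m₀ := by rw [hm₀_def]; ring
  have hm₀L : m₀ ^ q * d ^ (q + 1) + m₀ * (d * (a - a ^ q ^ 4)) = 0 := by
    have h4 : a - a ^ q ^ 4 = -(d ^ q ^ 4) := by rw [hd4]; ring
    rw [h4, hm₀_def]
    ring
  obtain ⟨m₁, hK1, hL1⟩ := hex
  -- the bijection with the q-element subfield
  have hEquiv : {m : F // m ^ q ^ 2 = m ∧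
      m ^ q * d ^ (q + 1)
        + m * (d * (a - a ^ q ^ 4)) + c = 0} ≃ {t : F // t ^ q = t} := by
    refine ⟨fun m => ⟨(m.1 - m₁) * m₀⁻¹, ?_⟩, fun t => ⟨m₁ + t.1 * m₀, ?_, ?_⟩, ?_, ?_⟩
    · -- forward map lands in the subfield
      obtain ⟨m, hmK, hmL⟩ := m
      have huL : (m - m₁) ^ q * d ^ (q + 1) + (m - m₁) * (d * (a - a ^ q ^ 4)) = 0 := by
        have h := frobsub 1 m m₁
        simp only [pow_one] at h
        rw [h]
        linear_combination hmL - hL1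
      have key2 : (m - m₁) ^ q * m₀ = (m - m₁) * m₀ ^ q := by
        have hα : d ^ (q + 1) ≠ 0 := pow_ne_zero _ hd
        refine mul_right_cancel₀ hα ?_
        linear_combination m₀ * huL - (m - m₁) * hm₀L
      have hm₀q : m₀ ^ q ≠ 0 := pow_ne_zero _ hm₀
      show ((m - m₁) * m₀⁻¹) ^ q = (m - m₁) * m₀⁻¹
      rw [mul_pow, inv_pow]
      field_simp
      linear_combination key2
    · -- membership in F_{q^2}
      obtain ⟨t, ht⟩ := t
      have ht2 : t ^ q ^ 2 = t := by
        rw [show q ^ 2 = q * q by ring, pow_mul, ht, ht]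
      have h := frobadd 2 m₁ (t * m₀)
      rw [h, mul_pow, ht2, hm₀K, hK1]
    · -- the affine equation
      obtain ⟨t, ht⟩ := t
      have hpq : (m₁ + t * m₀) ^ q = m₁ ^ q + t * m₀ ^ q := by
        have h := frobadd 1 m₁ (t * m₀)
        simp only [pow_one] at h
        rw [h, mul_pow, ht]
      rw [hpq]
      linear_combination hL1 + t * hm₀L
    · -- left inverse
      rintro ⟨m, hm⟩
      ext
      field_simp
      ring
    · -- right inverse
      rintro ⟨t, ht⟩
      ext
      field_simp
      ring
  rw [Nat.card_congr hEquiv]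
  -- now count the fixed points of x ↦ x^q
  obtain ⟨g, hg⟩ := IsCyclic.exists_generator (α := Fˣ)
  have hordg : orderOf g = q ^ 6 - 1 := by
    rw [orderOf_eq_card_of_forall_mem_zpowers hg, Nat.card_eq_fintype_card,
      Fintype.card_units, hF]
  have hN : q ^ 6 - 1 ≠ 0 := by
    have : 1 < q ^ 6 := Nat.one_lt_pow (by norm_num) hq1
    omega
  have hdvd : (q - 1) ∣ q ^ 6 - 1 := by
    simpa using Nat.sub_dvd_pow_sub_pow q 1 6
  have hord : orderOf (g ^ ((q ^ 6 - 1) / (q - 1))) = q - 1 := by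
    rw [orderOf_pow, hordg,
      Nat.gcd_eq_right (Nat.div_dvd_of_dvd hdvd), Nat.div_div_self hdvd hN]
  have hprim : IsPrimitiveRoot ((g ^ ((q ^ 6 - 1) / (q - 1)) : Fˣ) : F) (q - 1) := by
    have hp0 : IsPrimitiveRoot (g ^ ((q ^ 6 - 1) / (q - 1)))
        (orderOf (g ^ ((q ^ 6 - 1) / (q - 1)))) :=
      IsPrimitiveRoot.orderOf (g ^ ((q ^ 6 - 1) / (q - 1)))
    rw [hord] at hp0
    exact IsPrimitiveRoot.coe_units_iff.mpr hp0
  have hcardroots : (Polynomial.nthRootsFinset (q - 1) (1 : F)).card = q - 1 :=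
    hprim.card_nthRootsFinset
  have hq1pos : 0 < q - 1 := by omega
  have hset : (Finset.univ.filter fun t : F => t ^ q = t)
      = insert (0 : F) (Polynomial.nthRootsFinset (q - 1) (1 : F)) := by
    ext t
    simp only [Finset.mem_filter, Finset.mem_univ, true_and, Finset.mem_insert,
      Polynomial.mem_nthRootsFinset hq1pos (1 : F)]
    constructor
    · intro h
      rcases eq_or_ne t 0 with h0 | h0
      · exact Or.inl h0
      · refine Or.inr (mul_right_cancel₀ h0 ?_)
        rw [← pow_succ, show q - 1 + 1 = q by omega, h, one_mul]
    · rintro (rfl | h1)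
      · exact zero_pow (by omega)
      · rw [show q = q - 1 + 1 by omega, pow_succ, h1, one_mul]
  have h0notmem : (0 : F) ∉ Polynomial.nthRootsFinset (q - 1) (1 : F) := by
    rw [Polynomial.mem_nthRootsFinset hq1pos (1 : F), zero_pow hq1pos.ne']
    exact fun h => zero_ne_one h
  rw [Nat.card_eq_fintype_card, Fintype.card_subtype, hset,
    Finset.card_insert_of_notMem h0notmem, hcardroots]
  omega
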